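/- Let I be a nonzero homogeneous ideal of the standard graded polynomial ring S = k[x_1,…,x_n] and set p = pd(S/I). Then T_p(S/I) ≤ T_{p−1}(S/I) + t_1(S/I), where t_1(S/I) is the minimal degree of a minimal generator of I. -/

import Mathlib

open MvPolynomial

/-- The degree-`d` homogeneous piece of the standard graded polynomial ring
`S = k[x_1,…,x_n]` (each variable of degree one), with pieces indexed by `ℤ`
(zero in negative degrees). -/
noncomputable def polyPiece (k : Type) [Field k] (n : ℕ) (d : ℤ) :
    Submodule k (MvPolynomial (Fin n) k) :=
  if 0 ≤ d then MvPolynomial.homogeneousSubmodule (Fin n) k d.toNat else ⊥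

/-- The irrelevant maximal ideal `(x_1,…,x_n)` of `S = k[x_1,…,x_n]`. -/
noncomputable def maxIdeal (k : Type) [Field k] (n : ℕ) : Ideal (MvPolynomial (Fin n) k) :=
  Ideal.span (Set.range MvPolynomial.X)

/-- The degree-`d` piece of the graded free module `⊕_{t : ι} S(-dg t)`,
realized concretely as `ι →₀ S`. -/
noncomputable def freePiece (k : Type) [Field k] (n : ℕ) {ι : Type} (dg : ι → ℤ) (d : ℤ) :
    Submodule k (ι →₀ MvPolynomial (Fin n) k) :=
  ⨅ t : ι, (polyPiece k n (d - dg t)).comap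
    ((Finsupp.lapply t : (ι →₀ MvPolynomial (Fin n) k) →ₗ[MvPolynomial (Fin n) k]
        MvPolynomial (Fin n) k).restrictScalars k)

/-- `piece` is a grading on the `S`-module `M`, making `M` a graded `S`-module. -/
structure IsGrading (k : Type) [Field k] (n : ℕ) (M : Type) [AddCommGroup M]
    [Module (MvPolynomial (Fin n) k) M] [Module k M]
    [IsScalarTower k (MvPolynomial (Fin n) k) M]
    (piece : ℤ → Submodule k M) : Prop where
  internal : DirectSum.IsInternal piece
  smul_mem : ∀ (i : ℕ) (d : ℤ) ⦃s : MvPolynomial (Fin n) k⦄,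
      s ∈ MvPolynomial.homogeneousSubmodule (Fin n) k i →
      ∀ ⦃m : M⦄, m ∈ piece d → s • m ∈ piece ((i : ℤ) + d)

/-- A minimal graded free resolution `⋯ → F_1 → F_0 → M → 0` of the graded
`S`-module `M` (with grading `piece`), where `F_i = ⊕_{t : ι i} S(-dg i t)` is
realized as `ι i →₀ S`.  All the `ι i` are finite, so `M` is finitely generated. -/
structure MinFreeRes (k : Type) [Field k] (n : ℕ) (M : Type) [AddCommGroup M]
    [Module (MvPolynomial (Fin n) k) M] [Module k M]
    [IsScalarTower k (MvPolynomial (Fin n) k) M]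
    (piece : ℤ → Submodule k M) where
  ι : ℕ → Type
  fin : ∀ i, Fintype (ι i)
  dg : ∀ i, ι i → ℤ
  diff : ∀ i, (ι (i + 1) →₀ MvPolynomial (Fin n) k) →ₗ[MvPolynomial (Fin n) k]
      (ι i →₀ MvPolynomial (Fin n) k)
  aug : (ι 0 →₀ MvPolynomial (Fin n) k) →ₗ[MvPolynomial (Fin n) k] M
  aug_surjective : Function.Surjective aug
  ker_aug : LinearMap.ker aug = LinearMap.range (diff 0)
  exact : ∀ i, LinearMap.ker (diff i) = LinearMap.range (diff (i + 1))
  diff_graded : ∀ i (d : ℤ) x, x ∈ freePiece k n (dg (i + 1)) d →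
      diff i x ∈ freePiece k n (dg i) d
  aug_graded : ∀ (d : ℤ) x, x ∈ freePiece k n (dg 0) d → aug x ∈ piece d
  minimal : ∀ i, LinearMap.range (diff i) ≤
      maxIdeal k n • (⊤ : Submodule (MvPolynomial (Fin n) k)
        (ι i →₀ MvPolynomial (Fin n) k))

namespace MinFreeRes

variable {k : Type} [Field k] {n : ℕ} {M : Type} [AddCommGroup M]
  [Module (MvPolynomial (Fin n) k) M] [Module k M]
  [IsScalarTower k (MvPolynomial (Fin n) k) M] {piece : ℤ → Submodule k M}

/-- The resolution has length exactly `p`; equivalently, `pd_S M = p`. -/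
def lengthEq (R : MinFreeRes k n M piece) (p : ℕ) : Prop :=
  Nonempty (R.ι p) ∧ ∀ i, p < i → IsEmpty (R.ι i)

/-- The `i`-th maximal graded shift `T_i(M)`: the largest degree of a generator of
the `i`-th term of the minimal graded free resolution of `M` (equivalently, the top
degree of `Tor_i^S(M,k)`), and `⊥` if that term vanishes. -/
noncomputable def T (R : MinFreeRes k n M piece) (i : ℕ) : WithBot ℤ :=
  letI := R.fin i
  (Finset.univ : Finset (R.ι i)).sup fun t => ((R.dg i t : ℤ) : WithBot ℤ)

/-- The Castelnuovo–Mumford regularity `reg M = max_{0 ≤ i ≤ p} (T_i(M) - i)`,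
where `p = pd M`. -/
noncomputable def reg (R : MinFreeRes k n M piece) (p : ℕ) : WithBot ℤ :=
  (Finset.range (p + 1)).sup fun i => R.T i + ((-(i : ℤ) : ℤ) : WithBot ℤ)

end MinFreeRes

/-- The canonical degree-`d` graded piece of `S/I`. -/
noncomputable def quotPiece (k : Type) [Field k] (n : ℕ) (I : Ideal (MvPolynomial (Fin n) k))
    (d : ℤ) : Submodule k (MvPolynomial (Fin n) k ⧸ I) :=
  (polyPiece k n d).map (Ideal.Quotient.mkₐ k I).toLinearMap

/-- `I` is a homogeneous ideal of `S = k[x_1,…,x_n]` for the standard grading. -/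
def IsHomogeneousIdeal (k : Type) [Field k] (n : ℕ)
    (I : Ideal (MvPolynomial (Fin n) k)) : Prop :=
  ∀ f ∈ I, ∀ d : ℕ, MvPolynomial.homogeneousComponent d f ∈ I

/-- The depth of `M` (w.r.t. the homogeneous maximal ideal): the supremum of the
lengths of `M`-regular sequences contained in `(x_1,…,x_n)`. -/
noncomputable def moduleDepth (k : Type) [Field k] (n : ℕ) (M : Type) [AddCommGroup M]
    [Module (MvPolynomial (Fin n) k) M] : ℕ∞ :=
  sSup {r : ℕ∞ | ∃ L : List (MvPolynomial (Fin n) k), (L.length : ℕ∞) = r ∧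
    (∀ f ∈ L, f ∈ maxIdeal k n) ∧ RingTheory.Sequence.IsRegular M L}

/-- The Krull dimension of the module `M`, i.e. `dim (S / ann M)`. -/
noncomputable def moduleDim (k : Type) [Field k] (n : ℕ) (M : Type) [AddCommGroup M]
    [Module (MvPolynomial (Fin n) k) M] : WithBot ℕ∞ :=
  ringKrullDim (MvPolynomial (Fin n) k ⧸ Module.annihilator (MvPolynomial (Fin n) k) M)


section Aux

open MvPolynomial Finsupp

variable {k : Type} [Field k] {n : ℕ}

local notation "S" => MvPolynomial (Fin n) k

lemma polyPiece_neg {d : ℤ} (hd : d < 0) : polyPiece k n d = ⊥ := by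
  simp [polyPiece, not_le.2 hd]

lemma mem_polyPiece_nonneg {d : ℤ} (hd : 0 ≤ d) {f : S} :
    f ∈ polyPiece k n d ↔ f ∈ homogeneousSubmodule (Fin n) k d.toNat := by
  simp [polyPiece, hd]

lemma one_mem_polyPiece_zero : (1 : S) ∈ polyPiece k n 0 := by
  rw [mem_polyPiece_nonneg le_rfl, mem_homogeneousSubmodule]
  simpa using isHomogeneous_one (Fin n) k

lemma mul_mem_polyPiece {a b : ℤ} {f g : S} (hf : f ∈ polyPiece k n a)
    (hg : g ∈ polyPiece k n b) : f * g ∈ polyPiece k n (a + b) := by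
  rcases lt_or_ge a 0 with ha | ha
  · rw [polyPiece_neg ha] at hf
    simp only [Submodule.mem_bot] at hf
    simp [hf]
  rcases lt_or_ge b 0 with hb | hb
  · rw [polyPiece_neg hb] at hg
    simp only [Submodule.mem_bot] at hg
    simp [hg]
  rw [mem_polyPiece_nonneg ha, mem_homogeneousSubmodule] at hf
  rw [mem_polyPiece_nonneg hb, mem_homogeneousSubmodule] at hg
  rw [mem_polyPiece_nonneg (by omega), mem_homogeneousSubmodule]
  have h : (a + b).toNat = a.toNat + b.toNat := by omega
  rw [h]
  exact hf.mul hg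

lemma mem_freePiece_iff {ι : Type} (dg : ι → ℤ) (d : ℤ) (x : ι →₀ S) :
    x ∈ freePiece k n dg d ↔ ∀ t, x t ∈ polyPiece k n (d - dg t) := by
  simp only [freePiece, Submodule.mem_iInf, Submodule.mem_comap, LinearMap.coe_restrictScalars,
    Finsupp.lapply_apply]

lemma single_mem_freePiece {ι : Type} (dg : ι → ℤ) (d : ℤ) (t : ι) {f : S}
    (hf : f ∈ polyPiece k n (d - dg t)) :
    Finsupp.single t f ∈ freePiece k n dg d := by
  rw [mem_freePiece_iff]
  intro t'
  rcases eq_or_ne t' t with rfl | h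
  · simpa using hf
  · simp [Finsupp.single_apply, Ne.symm h]

lemma single_one_mem_freePiece {ι : Type} (dg : ι → ℤ) (t : ι) :
    Finsupp.single t (1 : S) ∈ freePiece k n dg (dg t) := by
  apply single_mem_freePiece
  simpa using one_mem_polyPiece_zero

lemma smul_mem_freePiece {ι : Type} {dg : ι → ℤ} {a d : ℤ} {f : S} {x : ι →₀ S}
    (hf : f ∈ polyPiece k n a) (hx : x ∈ freePiece k n dg d) :
    f • x ∈ freePiece k n dg (a + d) := by
  rw [mem_freePiece_iff] at hx ⊢
  intro t
  have : (a + d) - dg t = a + (d - dg t) := by ring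
  rw [this]
  simpa using mul_mem_polyPiece hf (hx t)

end Aux

section Aux2

open MvPolynomial Finsupp

variable {k : Type} [Field k] {n : ℕ}

local notation "S" => MvPolynomial (Fin n) k

/-- Extracting the component of a sum of homogeneous elements. -/
lemma sum_component {α : Type} (A : Finset α) (e : α → ℤ) (c : α → S)
    (hc : ∀ a ∈ A, c a ∈ polyPiece k n (e a)) {a0 : α} (ha0 : a0 ∈ A)
    (hinj : ∀ a ∈ A, e a = e a0 → a = a0) (h0 : 0 ≤ e a0) :
    homogeneousComponent (e a0).toNat (∑ a ∈ A, c a) = c a0 := by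
  rw [map_sum]
  rw [Finset.sum_eq_single_of_mem a0 ha0]
  · have := (mem_polyPiece_nonneg h0).1 (hc a0 ha0)
    rw [homogeneousComponent_of_mem this, if_pos rfl]
  · intro a ha hne
    rcases lt_or_ge (e a) 0 with hea | hea
    · have : c a = 0 := by
        have := hc a ha
        rw [polyPiece_neg hea, Submodule.mem_bot] at this
        exact this
      simp [this]
    · rw [homogeneousComponent_of_mem ((mem_polyPiece_nonneg hea).1 (hc a ha))]
      rw [if_neg]
      intro h
      exact hne (hinj a ha (by omega))

lemma polyPiece_indep {α : Type} (A : Finset α) (e : α → ℤ) (c : α → S)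
    (hc : ∀ a ∈ A, c a ∈ polyPiece k n (e a))
    (hinj : ∀ a ∈ A, ∀ b ∈ A, e a = e b → a = b)
    (h : ∑ a ∈ A, c a = 0) : ∀ a ∈ A, c a = 0 := by
  intro a ha
  rcases lt_or_ge (e a) 0 with hea | hea
  · have := hc a ha
    rwa [polyPiece_neg hea, Submodule.mem_bot] at this
  · have := sum_component A e c hc ha (fun b hb hba => hinj b hb a ha hba) hea
    rw [h, map_zero] at this
    exact this.symm

lemma freePiece_indep {ι : Type} (dg : ι → ℤ) {α : Type} (A : Finset α) (e : α → ℤ)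
    (c : α → (ι →₀ S)) (hc : ∀ a ∈ A, c a ∈ freePiece k n dg (e a))
    (hinj : ∀ a ∈ A, ∀ b ∈ A, e a = e b → a = b)
    (h : ∑ a ∈ A, c a = 0) : ∀ a ∈ A, c a = 0 := by
  intro a ha
  ext t
  have hsum : ∑ b ∈ A, (c b) t = 0 := by
    rw [← Finsupp.finset_sum_apply, h]; rfl
  have := polyPiece_indep A (fun b => e b - dg t) (fun b => (c b) t)
    (fun b hb => (mem_freePiece_iff dg (e b) (c b)).1 (hc b hb) t)
    (fun b hb b' hb' hbb' => hinj b hb b' hb'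
      (by have h2 : e b - dg t = e b' - dg t := hbb'; omega)) hsum a ha
  have h3 : (c a) t = 0 := this
  simp [h3]

/-- Decomposability into homogeneous pieces. -/
def Decomp {V : Type} [AddCommGroup V] [Module k V] (piece : ℤ → Submodule k V) (x : V) : Prop :=
  ∃ (A : Finset ℤ) (c : ℤ → V), (∀ d ∈ A, c d ∈ piece d) ∧ ∑ d ∈ A, c d = x

lemma decomp_add {V : Type} [AddCommGroup V] [Module k V] {piece : ℤ → Submodule k V}
    {x y : V} (hx : Decomp piece x) (hy : Decomp piece y) : Decomp piece (x + y) := by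
  obtain ⟨A, c, hc, rfl⟩ := hx
  obtain ⟨B, c', hc', rfl⟩ := hy
  refine ⟨A ∪ B, fun d => (if d ∈ A then c d else 0) + (if d ∈ B then c' d else 0), ?_, ?_⟩
  · intro d hd
    apply Submodule.add_mem
    · split
      · exact hc d ‹_›
      · exact Submodule.zero_mem _
    · split
      · exact hc' d ‹_›
      · exact Submodule.zero_mem _
  · rw [Finset.sum_add_distrib, Finset.sum_ite_mem, Finset.sum_ite_mem,
      Finset.union_inter_cancel_left, Finset.union_inter_cancel_right]

lemma decomp_S (f : S) : Decomp (polyPiece k n) f := by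
  refine ⟨(Finset.range (f.totalDegree + 1)).image ((↑) : ℕ → ℤ),
    fun d => homogeneousComponent d.toNat f, ?_, ?_⟩
  · intro d hd
    simp only [Finset.mem_image, Finset.mem_range] at hd
    obtain ⟨i, _, rfl⟩ := hd
    rw [mem_polyPiece_nonneg (by positivity), mem_homogeneousSubmodule]
    have h : ((i : ℤ)).toNat = i := by omega
    rw [h]
    exact homogeneousComponent_isHomogeneous i f
  · rw [Finset.sum_image (by intro a _ b _ h; exact_mod_cast h)]
    simpa using sum_homogeneousComponent f

lemma decomp_single {ι : Type} (dg : ι → ℤ) (t : ι) (f : S) :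
    Decomp (freePiece k n dg) (Finsupp.single t f) := by
  obtain ⟨A, c, hc, hsum⟩ := decomp_S (k := k) (n := n) f
  refine ⟨A.image (· + dg t), fun d => Finsupp.single t (c (d - dg t)), ?_, ?_⟩
  · intro d hd
    simp only [Finset.mem_image] at hd
    obtain ⟨e, he, rfl⟩ := hd
    apply single_mem_freePiece
    simpa using hc e he
  · rw [Finset.sum_image (by intro a _ b _ h; exact add_right_cancel h)]
    simp only [add_sub_cancel_right]
    have : ∀ g : S, Finsupp.single t g = Finsupp.lsingle (R := S) t g := fun _ => rfl
    simp only [this]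
    rw [← map_sum (Finsupp.lsingle t) c A, hsum]

lemma decomp_F {ι : Type} (dg : ι → ℤ) (x : ι →₀ S) : Decomp (freePiece k n dg) x := by
  induction x using Finsupp.induction with
  | zero => exact ⟨∅, fun _ => 0, by simp, by simp⟩
  | single_add t f x _ _ ih => exact decomp_add (decomp_single dg t f) ih

end Aux2

section Aux3

open MvPolynomial Finsupp

variable {k : Type} [Field k] {n : ℕ}

local notation "S" => MvPolynomial (Fin n) k

lemma mem_quotPiece_iff {I : Ideal S} {d : ℤ} {m : S ⧸ I} :
    m ∈ quotPiece k n I d ↔ ∃ f ∈ polyPiece k n d, Ideal.Quotient.mk I f = m := by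
  simp only [quotPiece, Submodule.mem_map]
  rfl

lemma quotPiece_neg {I : Ideal S} {d : ℤ} (hd : d < 0) : quotPiece k n I d = ⊥ := by
  rw [quotPiece, polyPiece_neg hd, Submodule.map_bot]

set_option synthInstance.maxHeartbeats 1000000 in
lemma quot_indep {I : Ideal S} (hIhom : IsHomogeneousIdeal k n I)
    {α : Type} (A : Finset α) (e : α → ℤ) (c : α → S ⧸ I)
    (hc : ∀ a ∈ A, c a ∈ quotPiece k n I (e a))
    (hinj : ∀ a ∈ A, ∀ b ∈ A, e a = e b → a = b)
    (h : ∑ a ∈ A, c a = 0) : ∀ a ∈ A, c a = 0 := by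
  have hch : ∀ a, ∃ f : S, a ∈ A → (f ∈ polyPiece k n (e a) ∧ Ideal.Quotient.mk I f = c a) := by
    intro a
    by_cases ha : a ∈ A
    · obtain ⟨f, hf, hf2⟩ := mem_quotPiece_iff.1 (hc a ha)
      exact ⟨f, fun _ => ⟨hf, hf2⟩⟩
    · exact ⟨0, fun h => absurd h ha⟩
  choose g hg using hch
  intro a ha
  rcases lt_or_ge (e a) 0 with hea | hea
  · have := hc a ha
    rwa [quotPiece_neg hea, Submodule.mem_bot] at this
  · have hsum : (∑ b ∈ A, g b) ∈ I := by
      rw [← Ideal.Quotient.eq_zero_iff_mem, map_sum]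
      rw [Finset.sum_congr rfl (fun b hb => (hg b hb).2)]
      exact h
    have hcomp := sum_component A e g (fun b hb => (hg b hb).1) ha
      (fun b hb hba => hinj b hb a ha hba) hea
    have : g a ∈ I := by
      rw [← hcomp]
      exact hIhom _ hsum _
    rw [← (hg a ha).2, Ideal.Quotient.eq_zero_iff_mem]
    exact this

lemma constantCoeff_eq_zero_of_mem_maxIdeal {f : S} (hf : f ∈ maxIdeal k n) :
    constantCoeff f = 0 := by
  have : maxIdeal k n ≤ RingHom.ker (constantCoeff (R := k) (σ := Fin n)) := by
    rw [maxIdeal, Ideal.span_le]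
    rintro _ ⟨i, rfl⟩
    simp [RingHom.mem_ker]
  exact this hf

lemma one_not_mem_maxIdeal : (1 : S) ∉ maxIdeal k n := by
  intro h
  have := constantCoeff_eq_zero_of_mem_maxIdeal h
  simp at this

lemma sub_C_constantCoeff_mem_maxIdeal (f : S) :
    f - C (constantCoeff f) ∈ maxIdeal k n := by
  have h : ∀ m : Fin n →₀ ℕ, m ≠ 0 → (monomial m (coeff m f)) ∈ maxIdeal k n := by
    intro m hm
    obtain ⟨i, hi⟩ : ∃ i, m i ≠ 0 := by
      by_contra hc
      push_neg at hc
      exact hm (Finsupp.ext hc)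
    have hm' : m = (m - Finsupp.single i 1) + Finsupp.single i 1 := by
      ext j
      rcases eq_or_ne j i with rfl | hj
      · simp only [Finsupp.add_apply, Finsupp.tsub_apply, Finsupp.single_eq_same]
        omega
      · simp only [Finsupp.add_apply, Finsupp.tsub_apply,
          Finsupp.single_eq_of_ne' (Ne.symm hj)]
        omega
    have hdecomp : monomial m (coeff m f) =
        monomial (m - Finsupp.single i 1) (coeff m f) * X i := by
      set a := coeff m f with ha
      conv_lhs => rw [hm']
      rw [monomial_add_single, pow_one]
    rw [hdecomp]
    exact Ideal.mul_mem_left _ _ (Ideal.subset_span ⟨i, rfl⟩)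
  have hsum : f - C (constantCoeff f) =
      ∑ m ∈ f.support.erase 0, monomial m (coeff m f) := by
    by_cases h0 : (0 : Fin n →₀ ℕ) ∈ f.support
    · have hc : (monomial (0 : Fin n →₀ ℕ)) (coeff 0 f) = C (constantCoeff f) := by
        rw [monomial_zero', constantCoeff_eq]
      nth_rewrite 1 [f.as_sum]
      rw [← Finset.sum_erase_add _ _ h0, hc, add_sub_cancel_right]
    · have hc0 : constantCoeff f = 0 := by
        rw [constantCoeff_eq]
        exact MvPolynomial.notMem_support_iff.1 h0
      rw [hc0, map_zero, sub_zero, Finset.erase_eq_of_notMem h0]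
      exact f.as_sum
  rw [hsum]
  exact Ideal.sum_mem _ (fun m hm => h m (Finset.ne_of_mem_erase hm))

lemma coeff_mem_of_mem_maxIdeal_smul {ι : Type} {x : ι →₀ S}
    (hx : x ∈ maxIdeal k n • (⊤ : Submodule S (ι →₀ S))) (t : ι) :
    x t ∈ maxIdeal k n := by
  refine Submodule.smul_induction_on hx ?_ ?_
  · intro r hr m _
    rw [Finsupp.smul_apply]
    exact Ideal.mul_mem_right _ _ hr
  · intro y z hy hz
    rw [Finsupp.add_apply]
    exact Ideal.add_mem _ hy hz

lemma eq_C_of_mem_polyPiece_zero {f : S} (hf : f ∈ polyPiece k n 0) :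
    f = C (constantCoeff f) := by
  rw [mem_polyPiece_nonneg le_rfl, mem_homogeneousSubmodule] at hf
  ext m
  rcases eq_or_ne m 0 with rfl | hm
  · simp [constantCoeff_eq]
  · rw [hf.coeff_eq_zero (by rwa [Int.toNat_zero, Ne, Finsupp.degree_eq_zero_iff])]
    rw [coeff_C, if_neg (Ne.symm hm)]

lemma exists_graded_preimage {V : Type} [AddCommGroup V] [Module k V]
    [Module (MvPolynomial (Fin n) k) V]
    (pieceW : ℤ → Submodule k V)
    (hindep : ∀ (A : Finset ℤ) (c : ℤ → V), (∀ d ∈ A, c d ∈ pieceW d) →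
      ∑ d ∈ A, c d = 0 → ∀ d ∈ A, c d = 0)
    {ι₁ : Type} (dg1 : ι₁ → ℤ)
    (ψ : (ι₁ →₀ S) →ₗ[MvPolynomial (Fin n) k] V)
    (hψ : ∀ (d : ℤ) x, x ∈ freePiece k n dg1 d → ψ x ∈ pieceW d)
    (d : ℤ) (y : V) (hy : y ∈ pieceW d) (hr : y ∈ LinearMap.range ψ) :
    ∃ x ∈ freePiece k n dg1 d, ψ x = y := by
  obtain ⟨x', rfl⟩ := hr
  obtain ⟨A, c, hc, hsum⟩ := decomp_F dg1 x'
  set c'' : ℤ → V := fun d' =>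
    (if d' ∈ A then ψ (c d') else 0) - (if d' = d then ψ x' else 0) with hc''
  have hmem : ∀ d' ∈ A ∪ {d}, c'' d' ∈ pieceW d' := by
    intro d' _
    apply Submodule.sub_mem
    · split
      · exact hψ _ _ (hc d' ‹_›)
      · exact Submodule.zero_mem _
    · split
      · subst ‹d' = d›; exact hy
      · exact Submodule.zero_mem _
  have hzero : ∑ d' ∈ A ∪ {d}, c'' d' = 0 := by
    rw [Finset.sum_sub_distrib, Finset.sum_ite_mem, Finset.union_inter_cancel_left]
    rw [Finset.sum_ite_eq' (A ∪ {d}) d (fun _ => ψ x')]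
    rw [if_pos (Finset.mem_union_right _ (Finset.mem_singleton_self d))]
    rw [← map_sum, hsum, sub_self]
  have hd := hindep (A ∪ {d}) c'' hmem hzero d
    (Finset.mem_union_right _ (Finset.mem_singleton_self d))
  have hd2 : (if d ∈ A then ψ (c d) else 0) = ψ x' := by
    have h2 := hd
    simp only [hc''] at h2
    rw [sub_eq_zero] at h2
    simpa using h2
  by_cases hdA : d ∈ A
  · rw [if_pos hdA] at hd2
    exact ⟨c d, hc d hdA, hd2⟩
  · rw [if_neg hdA] at hd2
    exact ⟨0, Submodule.zero_mem _, by rw [map_zero, hd2]⟩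


end Aux3

section Aux4

open MvPolynomial Finsupp

variable {k : Type} [Field k] {n : ℕ}

local notation "S" => MvPolynomial (Fin n) k

lemma single_one_not_mem_smul {ι : Type} (t : ι) :
    (Finsupp.single t 1 : ι →₀ S) ∉ maxIdeal k n • (⊤ : Submodule (MvPolynomial (Fin n) k) (ι →₀ S)) := by
  intro h
  have := coeff_mem_of_mem_maxIdeal_smul h t
  rw [Finsupp.single_eq_same] at this
  exact one_not_mem_maxIdeal this

lemma smul_mk {I : Ideal S} (r g : S) :
    r • (Ideal.Quotient.mk I g : S ⧸ I) = Ideal.Quotient.mk I (r * g) := by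
  rw [← Ideal.Quotient.mk_eq_mk, ← Ideal.Quotient.mk_eq_mk, ← Submodule.Quotient.mk_smul,
    smul_eq_mul]

lemma quot_indep' {I : Ideal S} (hIhom : IsHomogeneousIdeal k n I) :
    ∀ (A : Finset ℤ) (c : ℤ → S ⧸ I), (∀ d ∈ A, c d ∈ quotPiece k n I d) →
      ∑ d ∈ A, c d = 0 → ∀ d ∈ A, c d = 0 :=
  fun A c hc h => quot_indep hIhom A id c hc (fun a _ b _ hab => hab) h

lemma freePiece_indep' {ι : Type} (dg : ι → ℤ) :
    ∀ (A : Finset ℤ) (c : ℤ → (ι →₀ S)), (∀ d ∈ A, c d ∈ freePiece k n dg d) →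
      ∑ d ∈ A, c d = 0 → ∀ d ∈ A, c d = 0 :=
  fun A c hc h => freePiece_indep dg A id c hc (fun a _ b _ hab => hab) h

variable {I : Ideal (MvPolynomial (Fin n) k)}
variable (RI : MinFreeRes k n (MvPolynomial (Fin n) k ⧸ I) (quotPiece k n I))

lemma isEmpty_succ (i : ℕ) (h : IsEmpty (RI.ι i)) : IsEmpty (RI.ι (i + 1)) := by
  rw [← not_nonempty_iff]
  rintro ⟨t⟩
  have hz : Finsupp.single t (1:S) ∈ LinearMap.ker (RI.diff i) := by
    rw [LinearMap.mem_ker]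
    exact Finsupp.ext fun s => h.elim s
  rw [RI.exact i] at hz
  exact single_one_not_mem_smul t (RI.minimal (i+1) hz)

lemma nonempty_of_le {i j : ℕ} (hij : i ≤ j) (h : Nonempty (RI.ι j)) : Nonempty (RI.ι i) := by
  by_contra hc
  rw [not_nonempty_iff] at hc
  have : ∀ l, IsEmpty (RI.ι (i + l)) := by
    intro l
    induction l with
    | zero => exact hc
    | succ l ih => exact isEmpty_succ RI (i+l) ih
  have h2 := this (j - i)
  rw [Nat.add_sub_cancel' hij] at h2
  exact (not_nonempty_iff.2 h2) h

lemma mk_one_ne_zero (h0 : Nonempty (RI.ι 0)) : (Ideal.Quotient.mk I 1 : S ⧸ I) ≠ 0 := by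
  intro h
  obtain ⟨t⟩ := h0
  have hM : ∀ m : S ⧸ I, m = 0 := by
    intro m
    obtain ⟨g, rfl⟩ := Ideal.Quotient.mk_surjective m
    rw [← mul_one g, ← smul_mk, h, smul_zero]
  have hz : Finsupp.single t (1:S) ∈ LinearMap.ker RI.aug := LinearMap.mem_ker.2 (hM _)
  rw [RI.ker_aug] at hz
  exact single_one_not_mem_smul t (RI.minimal 0 hz)

lemma smul_eq_zero_of_mem {f : S} (hf : f ∈ I) (m : S ⧸ I) : f • m = 0 := by
  obtain ⟨g, rfl⟩ := Ideal.Quotient.mk_surjective m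
  rw [smul_mk, Ideal.Quotient.eq_zero_iff_mem]
  exact I.mul_mem_right g hf

lemma dg0_nonneg (t : RI.ι 0) : 0 ≤ RI.dg 0 t := by
  by_contra h
  push_neg at h
  have h1 : RI.aug (Finsupp.single t 1) ∈ quotPiece k n I (RI.dg 0 t) :=
    RI.aug_graded _ _ (single_one_mem_freePiece _ t)
  rw [quotPiece_neg h, Submodule.mem_bot] at h1
  have hz : Finsupp.single t (1:S) ∈ LinearMap.ker RI.aug := LinearMap.mem_ker.2 h1
  rw [RI.ker_aug] at hz
  exact single_one_not_mem_smul t (RI.minimal 0 hz)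

lemma exists_x0 (hIhom : IsHomogeneousIdeal k n I) :
    ∃ x0 ∈ freePiece k n (RI.dg 0) 0, RI.aug x0 = Ideal.Quotient.mk I 1 := by
  apply exists_graded_preimage (quotPiece k n I) (quot_indep' hIhom) (RI.dg 0) RI.aug
    RI.aug_graded 0
  · exact mem_quotPiece_iff.2 ⟨1, one_mem_polyPiece_zero, rfl⟩
  · exact LinearMap.mem_range.2 (RI.aug_surjective _)

lemma mem_smul_top_M {z : S ⧸ I}
    (hz : z ∈ maxIdeal k n • (⊤ : Submodule (MvPolynomial (Fin n) k) (S ⧸ I))) :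
    ∃ y ∈ maxIdeal k n • (⊤ : Submodule (MvPolynomial (Fin n) k) (RI.ι 0 →₀ S)),
      RI.aug y = z := by
  have heq : maxIdeal k n • (⊤ : Submodule (MvPolynomial (Fin n) k) (S ⧸ I)) =
      Submodule.map RI.aug (maxIdeal k n • ⊤) := by
    rw [Submodule.map_smul'', Submodule.map_top, LinearMap.range_eq_top.2 RI.aug_surjective]
  rw [heq] at hz
  exact Submodule.mem_map.1 hz

set_option maxHeartbeats 1000000 in
lemma aug_single_not_mem (t : RI.ι 0) :
    RI.aug (Finsupp.single t 1) ∉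
      maxIdeal k n • (⊤ : Submodule (MvPolynomial (Fin n) k) (S ⧸ I)) := by
  intro h
  obtain ⟨y, hy, hy2⟩ := mem_smul_top_M RI h
  have hz : Finsupp.single t 1 - y ∈ LinearMap.ker RI.aug := by
    rw [LinearMap.mem_ker, map_sub, hy2, sub_self]
  rw [RI.ker_aug] at hz
  have h2 : Finsupp.single t (1:S) ∈
      maxIdeal k n • (⊤ : Submodule (MvPolynomial (Fin n) k) (RI.ι 0 →₀ S)) := by
    have := Submodule.add_mem _ (RI.minimal 0 hz) hy
    simpa using this
  exact single_one_not_mem_smul t h2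

set_option maxHeartbeats 1000000 in
lemma iota0_eq (t t' : RI.ι 0) : t = t' := by
  by_contra hne
  obtain ⟨g, hg⟩ := Ideal.Quotient.mk_surjective (RI.aug (Finsupp.single t 1))
  obtain ⟨g', hg'⟩ := Ideal.Quotient.mk_surjective (RI.aug (Finsupp.single t' 1))
  set a : S := C (constantCoeff g) with ha
  set a' : S := C (constantCoeff g') with ha'
  have hga : RI.aug (Finsupp.single t 1) - a • (Ideal.Quotient.mk I 1) ∈
      maxIdeal k n • (⊤ : Submodule (MvPolynomial (Fin n) k) (S ⧸ I)) := by
    have : RI.aug (Finsupp.single t 1) - a • (Ideal.Quotient.mk I 1) =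
        (g - a) • (Ideal.Quotient.mk I 1) := by
      rw [sub_smul, ← hg, smul_mk, smul_mk, mul_one, mul_one]
    rw [this]
    exact Submodule.smul_mem_smul (sub_C_constantCoeff_mem_maxIdeal g) Submodule.mem_top
  have hga' : RI.aug (Finsupp.single t' 1) - a' • (Ideal.Quotient.mk I 1) ∈
      maxIdeal k n • (⊤ : Submodule (MvPolynomial (Fin n) k) (S ⧸ I)) := by
    have : RI.aug (Finsupp.single t' 1) - a' • (Ideal.Quotient.mk I 1) =
        (g' - a') • (Ideal.Quotient.mk I 1) := by
      rw [sub_smul, ← hg', smul_mk, smul_mk, mul_one, mul_one]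
    rw [this]
    exact Submodule.smul_mem_smul (sub_C_constantCoeff_mem_maxIdeal g') Submodule.mem_top
  have hz : a' • RI.aug (Finsupp.single t 1) - a • RI.aug (Finsupp.single t' 1) ∈
      maxIdeal k n • (⊤ : Submodule (MvPolynomial (Fin n) k) (S ⧸ I)) := by
    have heq : a' • RI.aug (Finsupp.single t 1) - a • RI.aug (Finsupp.single t' 1) =
        a' • (RI.aug (Finsupp.single t 1) - a • (Ideal.Quotient.mk I 1)) -
        a • (RI.aug (Finsupp.single t' 1) - a' • (Ideal.Quotient.mk I 1)) := by
      rw [smul_sub, smul_sub, smul_comm a a']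
      abel
    rw [heq]
    exact Submodule.sub_mem _ (Submodule.smul_mem _ _ hga) (Submodule.smul_mem _ _ hga')
  obtain ⟨y, hy, hy2⟩ := mem_smul_top_M RI hz
  have hker : a' • Finsupp.single t 1 - a • Finsupp.single t' 1 - y ∈
      LinearMap.ker RI.aug := by
    rw [LinearMap.mem_ker, map_sub, map_sub, map_smul, map_smul, hy2]
    abel
  rw [RI.ker_aug] at hker
  have hw : a' • Finsupp.single t (1:S) - a • Finsupp.single t' 1 ∈
      maxIdeal k n • (⊤ : Submodule (MvPolynomial (Fin n) k) (RI.ι 0 →₀ S)) := by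
    have := Submodule.add_mem _ (RI.minimal 0 hker) hy
    simpa using this
  have hat : a' ∈ maxIdeal k n := by
    have := coeff_mem_of_mem_maxIdeal_smul hw t
    simpa [Finsupp.single_eq_of_ne' (Ne.symm hne)] using this
  have hat' : a ∈ maxIdeal k n := by
    have := coeff_mem_of_mem_maxIdeal_smul hw t'
    simp only [Finsupp.sub_apply, Finsupp.smul_apply, Finsupp.single_eq_same,
      Finsupp.single_eq_of_ne' hne, smul_zero, smul_eq_mul, mul_one, zero_sub] at this
    have h4 : -a ∈ maxIdeal k n := by
      have h5 : a' * 0 - a = -a := by ring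
      rwa [h5] at this
    exact (Ideal.neg_mem_iff _).1 h4
  have haz : a = 0 := by
    have := constantCoeff_eq_zero_of_mem_maxIdeal hat'
    rw [ha] at this ⊢
    rw [constantCoeff_C] at this
    rw [this, map_zero]
  apply aug_single_not_mem RI t
  rw [haz, zero_smul, sub_zero] at hga
  exact hga

lemma exists_f (hIhom : IsHomogeneousIdeal k n I) (u1 : RI.ι 1) :
    ∃ f : S, f ∈ I ∧ f ≠ 0 ∧ f ∈ polyPiece k n (RI.dg 1 u1) := by
  have h0 : Nonempty (RI.ι 0) := nonempty_of_le RI (by omega) ⟨u1⟩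
  obtain ⟨t0⟩ := h0
  obtain ⟨x0, hx0p, hx0⟩ := exists_x0 RI hIhom
  have hsingle : ∀ y : RI.ι 0 →₀ S, y = Finsupp.single t0 (y t0) :=
    fun y => Finsupp.ext (fun t'' => by rw [iota0_eq RI t'' t0, Finsupp.single_eq_same])
  have hone := mk_one_ne_zero RI ⟨t0⟩
  set q := x0 t0 with hq
  have hq0 : q ∈ polyPiece k n (0 - RI.dg 0 t0) := (mem_freePiece_iff _ _ _).1 hx0p t0
  have hqne : q ≠ 0 := by
    intro h
    apply hone
    rw [← hx0, hsingle x0, ← hq, h, Finsupp.single_zero, map_zero]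
  have hdg0 : RI.dg 0 t0 = 0 := by
    rcases lt_or_eq_of_le (dg0_nonneg RI t0) with h | h
    · exfalso
      apply hqne
      have := hq0
      rwa [polyPiece_neg (by omega), Submodule.mem_bot] at this
    · omega
  rw [hdg0, sub_zero] at hq0
  have hquot := eq_C_of_mem_polyPiece_zero hq0
  set c0 := constantCoeff q with hc0
  have hc0ne : c0 ≠ 0 := fun h => hqne (by rw [hquot, h, map_zero])
  set w := RI.diff 0 (Finsupp.single u1 1) with hw
  have hwp : w ∈ freePiece k n (RI.dg 0) (RI.dg 1 u1) :=
    RI.diff_graded 0 _ _ (single_one_mem_freePiece _ u1)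
  have hwne : w ≠ 0 := by
    intro h
    have hz : Finsupp.single u1 (1:S) ∈ LinearMap.ker (RI.diff 0) := LinearMap.mem_ker.2 h
    rw [RI.exact 0] at hz
    exact single_one_not_mem_smul u1 (RI.minimal 1 hz)
  have haugw : RI.aug w = 0 := by
    have hz : w ∈ LinearMap.range (RI.diff 0) := ⟨_, rfl⟩
    rw [← RI.ker_aug] at hz
    exact hz
  set h1 := w t0 with hh
  have hh0 : h1 ∈ polyPiece k n (RI.dg 1 u1) := by
    have := (mem_freePiece_iff _ _ _).1 hwp t0
    rwa [hdg0, sub_zero] at this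
  have hhne : h1 ≠ 0 := fun h => hwne (by rw [hsingle w, ← hh, h, Finsupp.single_zero])
  have hCne : (C c0⁻¹ : S) ≠ 0 := by
    simpa using inv_ne_zero hc0ne
  refine ⟨C c0⁻¹ * h1, ?_, mul_ne_zero hCne hhne, ?_⟩
  · have hwx0 : (C c0⁻¹ * h1) • x0 = w := by
      conv_lhs => rw [hsingle x0, ← hq, hquot]
      rw [Finsupp.smul_single, smul_eq_mul]
      conv_rhs => rw [hsingle w, ← hh]
      congr 1
      calc (C c0⁻¹ * h1) * C c0 = (C c0⁻¹ * C c0) * h1 := by ring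
        _ = h1 := by rw [← C_mul, inv_mul_cancel₀ hc0ne, C_1, one_mul]
    rw [← Ideal.Quotient.eq_zero_iff_mem, ← mul_one (C c0⁻¹ * h1), ← smul_mk, ← hx0,
      ← map_smul, hwx0, haugw]
  · have hC : (C c0⁻¹ : S) ∈ polyPiece k n 0 := by
      rw [mem_polyPiece_nonneg le_rfl, mem_homogeneousSubmodule]
      simpa using isHomogeneous_C (Fin n) (c0⁻¹)
    have := mul_mem_polyPiece hC hh0
    rwa [zero_add] at this

end Aux4

section Aux5

open MvPolynomial Finsupp

variable {k : Type} [Field k] {n : ℕ}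

local notation "S" => MvPolynomial (Fin n) k

lemma single_eq_smul {ι : Type} (t : ι) (c : S) :
    Finsupp.single t c = c • Finsupp.single t (1 : S) := by
  rw [Finsupp.smul_single, smul_eq_mul, mul_one]

variable {I : Ideal (MvPolynomial (Fin n) k)}
variable (RI : MinFreeRes k n (MvPolynomial (Fin n) k ⧸ I) (quotPiece k n I))

set_option maxHeartbeats 2000000 in
lemma homotopy {e : ℤ} {f : MvPolynomial (Fin n) k} (hf : f ∈ polyPiece k n e) (hfI : f ∈ I)
    (i : ℕ) :
    ∃ σ : (RI.ι i →₀ S) →ₗ[MvPolynomial (Fin n) k] (RI.ι (i+1) →₀ S),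
      (∀ (d : ℤ) x, x ∈ freePiece k n (RI.dg i) d → σ x ∈ freePiece k n (RI.dg (i+1)) (d + e)) ∧
      (∀ y : RI.ι (i+1) →₀ S, RI.diff i (σ (RI.diff i y)) = f • RI.diff i y) := by
  induction i with
  | zero =>
    have hv : ∀ t : RI.ι 0, ∃ v ∈ freePiece k n (RI.dg 1) (RI.dg 0 t + e),
        RI.diff 0 v = f • Finsupp.single t 1 := by
      intro t
      apply exists_graded_preimage (freePiece k n (RI.dg 0)) (freePiece_indep' _) (RI.dg 1)
        (RI.diff 0) (RI.diff_graded 0)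
      · have := smul_mem_freePiece hf (single_one_mem_freePiece (RI.dg 0) t)
        rwa [add_comm] at this
      · rw [← RI.ker_aug, LinearMap.mem_ker, map_smul]
        exact smul_eq_zero_of_mem hfI _
    choose v hv1 hv2 using hv
    refine ⟨Finsupp.linearCombination (MvPolynomial (Fin n) k) v, ?_, ?_⟩
    · intro d x hx
      rw [Finsupp.linearCombination_apply, Finsupp.sum]
      apply Submodule.sum_mem
      intro t _
      have hmem := smul_mem_freePiece ((mem_freePiece_iff _ _ _).1 hx t) (hv1 t)
      have harith : (d - RI.dg 0 t) + (RI.dg 0 t + e) = d + e := by ring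
      rwa [harith] at hmem
    · have hcomp : (RI.diff 0).comp (Finsupp.linearCombination (MvPolynomial (Fin n) k) v) =
          f • (LinearMap.id (R := MvPolynomial (Fin n) k) (M := RI.ι 0 →₀ S)) := by
        apply Finsupp.lhom_ext
        intro t c
        rw [LinearMap.comp_apply, Finsupp.linearCombination_single, map_smul, hv2,
          LinearMap.smul_apply, LinearMap.id_apply, smul_comm c f, ← single_eq_smul]
      intro y
      have := LinearMap.congr_fun hcomp (RI.diff 0 y)
      simpa using this
  | succ i ih =>
    obtain ⟨σp, hσpg, hσp⟩ := ih
    have hv : ∀ t : RI.ι (i+1), ∃ v ∈ freePiece k n (RI.dg (i+2)) (RI.dg (i+1) t + e),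
        RI.diff (i+1) v = f • Finsupp.single t 1 - σp (RI.diff i (Finsupp.single t 1)) := by
      intro t
      apply exists_graded_preimage (freePiece k n (RI.dg (i+1))) (freePiece_indep' _)
        (RI.dg (i+2)) (RI.diff (i+1)) (RI.diff_graded (i+1))
      · apply Submodule.sub_mem
        · have hsm := smul_mem_freePiece hf (single_one_mem_freePiece (RI.dg (i+1)) t)
          have h2 : e + RI.dg (i+1) t = RI.dg (i+1) t + e := add_comm _ _
          rwa [h2] at hsm
        · exact hσpg _ _ (RI.diff_graded i _ _ (single_one_mem_freePiece (RI.dg (i+1)) t))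
      · rw [← RI.exact i, LinearMap.mem_ker, map_sub, map_smul, hσp (Finsupp.single t 1),
          sub_self]
    choose v hv1 hv2 using hv
    refine ⟨Finsupp.linearCombination (MvPolynomial (Fin n) k) v, ?_, ?_⟩
    · intro d x hx
      rw [Finsupp.linearCombination_apply, Finsupp.sum]
      apply Submodule.sum_mem
      intro t _
      have hmem := smul_mem_freePiece ((mem_freePiece_iff _ _ _).1 hx t) (hv1 t)
      have harith : (d - RI.dg (i+1) t) + (RI.dg (i+1) t + e) = d + e := by ring
      rwa [harith] at hmem
    · have hcomp : (RI.diff (i+1)).comp (Finsupp.linearCombination (MvPolynomial (Fin n) k) v) =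
          f • (LinearMap.id (R := MvPolynomial (Fin n) k) (M := RI.ι (i+1) →₀ S)) -
            σp.comp (RI.diff i) := by
        apply Finsupp.lhom_ext
        intro t c
        rw [LinearMap.comp_apply, Finsupp.linearCombination_single, map_smul, hv2,
          LinearMap.sub_apply, LinearMap.smul_apply, LinearMap.id_apply, LinearMap.comp_apply,
          smul_sub, smul_comm c f, ← single_eq_smul, ← map_smul σp, ← map_smul (RI.diff i),
          ← single_eq_smul]
      intro y
      have h1 := LinearMap.congr_fun hcomp (RI.diff (i+1) y)
      simp only [LinearMap.comp_apply, LinearMap.sub_apply, LinearMap.smul_apply,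
        LinearMap.id_apply] at h1
      have h2 : RI.diff i (RI.diff (i+1) y) = 0 := by
        have hm : RI.diff (i+1) y ∈ LinearMap.range (RI.diff (i+1)) := ⟨y, rfl⟩
        rw [← RI.exact i] at hm
        exact hm
      rw [h1, h2, map_zero, sub_zero]

end Aux5


set_option maxHeartbeats 4000000 in
/-- For a nonzero homogeneous ideal `I` of `S` with `p = pd (S/I)`,
`T_p(S/I) ≤ T_{p-1}(S/I) + t_1(S/I)`, where `t_1(S/I)` is the minimal degree of a
minimal generator of `I` (i.e. the least degree occurring in the first step of
the minimal graded free resolution of `S/I`). -/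
theorem stmt7 (k : Type) [Field k] (n : ℕ)
    (I : Ideal (MvPolynomial (Fin n) k)) (hI0 : I ≠ ⊥)
    (hIhom : IsHomogeneousIdeal k n I)
    (RI : MinFreeRes k n (MvPolynomial (Fin n) k ⧸ I) (quotPiece k n I))
    (p : ℕ) (hp : RI.lengthEq p)
    (t1 : ℤ) (ht1 : IsLeast (Set.range (RI.dg 1)) t1) :
    RI.T p ≤ RI.T (p - 1) + (t1 : WithBot ℤ) := by
  classical
  obtain ⟨u1, hu1⟩ := ht1.1
  have hp1 : 1 ≤ p := by
    by_contra h
    have h0 : p = 0 := by omega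
    have := hp.2 1 (by omega)
    exact this.elim u1
  obtain ⟨p', rfl⟩ : ∃ p', p = p' + 1 := ⟨p - 1, by omega⟩
  obtain ⟨f, hfI, hfne, hfp⟩ := exists_f RI hIhom u1
  rw [hu1] at hfp
  obtain ⟨σ, hσg, hσ⟩ := homotopy RI hfp hfI p'
  have hne_p : Nonempty (RI.ι (p'+1)) := hp.1
  have hne_p' : Nonempty (RI.ι p') := nonempty_of_le RI (by omega) hne_p
  letI : Fintype (RI.ι (p'+1)) := RI.fin _
  letI : Fintype (RI.ι p') := RI.fin _
  haveI := hne_p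
  haveI := hne_p'
  set D : ℤ := Finset.univ.sup' Finset.univ_nonempty (RI.dg (p'+1)) with hD
  set D' : ℤ := Finset.univ.sup' Finset.univ_nonempty (RI.dg p') with hD'
  have hT1 : RI.T (p'+1) = ((D : ℤ) : WithBot ℤ) := (Finset.coe_sup' _ _).symm
  have hT2 : RI.T p' = ((D' : ℤ) : WithBot ℤ) := (Finset.coe_sup' _ _).symm
  have hgoal : RI.T (p'+1) ≤ RI.T p' + (t1 : WithBot ℤ) := by
    rw [hT1, hT2, ← WithBot.coe_add, WithBot.coe_le_coe]
    by_contra hlt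
    push_neg at hlt
    obtain ⟨u, _, hu⟩ := Finset.exists_mem_eq_sup' (Finset.univ_nonempty) (RI.dg (p'+1))
    have hbot : ∀ z : RI.ι (p'+1) →₀ MvPolynomial (Fin n) k,
        z ∈ LinearMap.range (RI.diff (p'+1)) → z = 0 := by
      rintro z ⟨x, rfl⟩
      haveI hemp : IsEmpty (RI.ι (p'+2)) := hp.2 (p'+2) (by omega)
      have hx : x = 0 := Finsupp.ext fun s => hemp.elim s
      rw [hx, map_zero]
    have hkey : f • Finsupp.single u 1 - σ (RI.diff p' (Finsupp.single u 1)) = 0 := by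
      apply hbot
      rw [← RI.exact p', LinearMap.mem_ker, map_sub, map_smul, hσ (Finsupp.single u 1),
        sub_self]
    have hcoeff : (f • Finsupp.single u (1 : MvPolynomial (Fin n) k)) u = f := by
      rw [Finsupp.smul_apply, Finsupp.single_eq_same, smul_eq_mul, mul_one]
    have hzero : (σ (RI.diff p' (Finsupp.single u 1))) u = 0 := by
      set w := RI.diff p' (Finsupp.single u 1) with hw
      have hexp : σ w = w.sum fun s c => c • σ (Finsupp.single s 1) := by
        conv_lhs => rw [← Finsupp.sum_single w]
        rw [map_finsuppSum]
        apply Finsupp.sum_congr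
        intro s _
        rw [single_eq_smul, map_smul]
      rw [hexp, Finsupp.sum, Finsupp.finset_sum_apply]
      apply Finset.sum_eq_zero
      intro s _
      have hs : σ (Finsupp.single s 1) ∈ freePiece k n (RI.dg (p'+1)) (RI.dg p' s + t1) :=
        hσg _ _ (single_one_mem_freePiece _ s)
      have hcs := (mem_freePiece_iff _ _ _).1 hs u
      have hneg : RI.dg p' s + t1 - RI.dg (p'+1) u < 0 := by
        have hle : RI.dg p' s ≤ D' := Finset.le_sup' (RI.dg p') (Finset.mem_univ s)
        omega
      rw [polyPiece_neg hneg, Submodule.mem_bot] at hcs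
      rw [Finsupp.smul_apply, hcs, smul_zero]
    apply hfne
    rw [← hcoeff]
    have h5 : f • Finsupp.single u (1 : MvPolynomial (Fin n) k) =
        σ (RI.diff p' (Finsupp.single u 1)) := by
      rwa [sub_eq_zero] at hkey
    rw [h5, hzero]
  have hidx : p' + 1 - 1 = p' := rfl
  rw [hidx]
  exact hgoal
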